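/- arXiv:1009.1768 — 4 statements merged into one kernel-verified Lean document; each statement's English description precedes it below -/
import Mathlib

section
/- Let X be an invertible symmetric 3×3 matrix over GF(2) with X ≠ 𝟙 and det(X + 𝟙) = 0. Then the rank of X + 𝟙 is 1 or 2; it equals 1 (i.e., the eigenspace of X for eigenvalue 1 is 2-dimensional) if and only if X² = 𝟙. Moreover, there are exactly 3 such involutions X. -/
open Matrix


lemma card_ker_aux (A : Matrix (Fin 3) (Fin 3) (ZMod 2)) :
    Fintype.card {v : Fin 3 → ZMod 2 // A.mulVec v = 0} = 2 ^ (3 - A.rank) ∧ A.rank ≤ 3 := by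
  haveI : Fintype (LinearMap.ker A.mulVecLin) := Fintype.ofFinite _
  have hrn := LinearMap.finrank_range_add_finrank_ker A.mulVecLin
  rw [Module.finrank_pi] at hrn
  simp only [Fintype.card_fin] at hrn
  have hker : Fintype.card {v : Fin 3 → ZMod 2 // A.mulVec v = 0}
      = Fintype.card (LinearMap.ker A.mulVecLin) := by
    apply Fintype.card_congr
    exact Equiv.subtypeEquivRight (fun v => by simp [LinearMap.mem_ker, mulVecLin_apply])
  have hcard : Fintype.card (LinearMap.ker A.mulVecLin)
      = 2 ^ Module.finrank (ZMod 2) (LinearMap.ker A.mulVecLin) := by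
    have := Module.card_eq_pow_finrank (K := ZMod 2) (V := LinearMap.ker A.mulVecLin)
    simpa [ZMod.card] using this
  have hrank : A.rank = Module.finrank (ZMod 2) (LinearMap.range A.mulVecLin) := rfl
  constructor
  · rw [hker, hcard]
    congr 1
    omega
  · omega

lemma rank_eq_iff (A : Matrix (Fin 3) (Fin 3) (ZMod 2)) (r : ℕ) (hr : r ≤ 3) :
    A.rank = r ↔ Fintype.card {v : Fin 3 → ZMod 2 // A.mulVec v = 0} = 2 ^ (3 - r) := by
  obtain ⟨hc, hle⟩ := card_ker_aux A
  rw [hc]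
  constructor
  · rintro rfl; rfl
  · intro h
    have := Nat.pow_right_injective (le_refl 2) h
    omega

set_option maxRecDepth 10000 in
lemma key : ∀ X : Matrix (Fin 3) (Fin 3) (ZMod 2),
      X = Xᵀ → X.det = 1 → X ≠ 1 → (X + 1).det = 0 →
        ((Fintype.card {v : Fin 3 → ZMod 2 // (X+1).mulVec v = 0} = 4
          ∨ Fintype.card {v : Fin 3 → ZMod 2 // (X+1).mulVec v = 0} = 2)
        ∧ (Fintype.card {v : Fin 3 → ZMod 2 // (X+1).mulVec v = 0} = 4 ↔ X ^ 2 = 1)) := by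
  decide

set_option maxRecDepth 10000 in
lemma key2 : Nat.card {X : Matrix (Fin 3) (Fin 3) (ZMod 2) //
        X = Xᵀ ∧ X.det = 1 ∧ X ≠ 1 ∧ (X + 1).det = 0 ∧ X ^ 2 = 1} = 3 := by
  rw [Nat.card_eq_fintype_card]
  decide

/-- For an invertible symmetric 3×3 matrix `X ≠ 1` over GF(2) with eigenvalue 1
(i.e. `det (X + 1) = 0`), the rank of `X + 1` is 1 or 2, and it equals 1 iff `X ^ 2 = 1`.
Moreover there are exactly 3 such involutions. -/
theorem rank_of_eigenvalue_one_matrices :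
    (∀ X : Matrix (Fin 3) (Fin 3) (ZMod 2),
      X = Xᵀ → X.det = 1 → X ≠ 1 → (X + 1).det = 0 →
        ((X + 1).rank = 1 ∨ (X + 1).rank = 2) ∧ ((X + 1).rank = 1 ↔ X ^ 2 = 1)) ∧
    Nat.card {X : Matrix (Fin 3) (Fin 3) (ZMod 2) //
        X = Xᵀ ∧ X.det = 1 ∧ X ≠ 1 ∧ (X + 1).det = 0 ∧ X ^ 2 = 1} = 3 := by
  refine ⟨fun X h1 h2 h3 h4 => ?_, key2⟩
  obtain ⟨hor, hiff⟩ := key X h1 h2 h3 h4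
  rw [rank_eq_iff _ 1 (by norm_num), rank_eq_iff _ 2 (by norm_num)]
  exact ⟨hor, hiff⟩
end

section
/- For every symmetric 3×3 matrix X over GF(2), det X = q₀(α(X)), where q₀(x₁,…,x₆) = x₁x₂ + x₃x₄ + x₅x₆. -/
open Matrix

/-- The coordinate map `α`. -/
def alphaMap (X : Matrix (Fin 3) (Fin 3) (ZMod 2)) : Fin 6 → ZMod 2 :=
  ![X 0 0, X 1 2 + X 1 1 * X 2 2, X 1 1, X 0 2 + X 0 0 * X 2 2, X 2 2,
    X 0 1 + X 0 0 * X 1 1]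

/-- The quadratic form `q₀(x) = x₁x₂ + x₃x₄ + x₅x₆` on GF(2)^6. -/
def q0 (x : Fin 6 → ZMod 2) : ZMod 2 := x 0 * x 1 + x 2 * x 3 + x 4 * x 5

/-- For every symmetric 3×3 matrix `X` over GF(2), `det X = q₀(α(X))`. -/
theorem det_eq_q0_alpha (X : Matrix (Fin 3) (Fin 3) (ZMod 2)) (hX : X = Xᵀ) :
    X.det = q0 (alphaMap X) := by
  have h10 : X 1 0 = X 0 1 := congrFun (congrFun hX 1) 0
  have h20 : X 2 0 = X 0 2 := congrFun (congrFun hX 2) 0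
  have h21 : X 2 1 = X 1 2 := congrFun (congrFun hX 2) 1
  have sq : ∀ x : ZMod 2, x ^ 2 = x := by decide
  have two : (2 : ZMod 2) = 0 := by decide
  have a0 : alphaMap X 0 = X 0 0 := rfl
  have a1 : alphaMap X 1 = X 1 2 + X 1 1 * X 2 2 := rfl
  have a2 : alphaMap X 2 = X 1 1 := rfl
  have a3 : alphaMap X 3 = X 0 2 + X 0 0 * X 2 2 := rfl
  have a4 : alphaMap X 4 = X 2 2 := rfl
  have a5 : alphaMap X 5 = X 0 1 + X 0 0 * X 1 1 := rfl
  rw [Matrix.det_fin_three, q0, a0, a1, a2, a3, a4, a5, h10, h20, h21]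
  linear_combination (-(X 0 0 * X 1 1 * X 2 2) - X 0 0 * X 1 2 - X 1 1 * X 0 2 - X 2 2 * X 0 1) * two + (-(X 0 0)) * sq (X 1 2) + (-(X 1 1)) * sq (X 0 2) + (-(X 2 2)) * sq (X 0 1) + (X 1 2 * X 0 1 * X 0 2) * two
end

section
/- For all symmetric 3×3 matrices X, Y over GF(2), B₀(α(X), α(Y)) = det(X + Y) + det X + det Y, where B₀ is the polar form of q₀, i.e., B₀(x,y) = q₀(x+y) + q₀(x) + q₀(y). (Note that α is not linear, so this does not follow trivially from det = q₀ ∘ α.) -/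
open Matrix

/-- The polar form of `q₀`. -/
def B0 (x y : Fin 6 → ZMod 2) : ZMod 2 := q0 (x + y) + q0 x + q0 y

/-- For all symmetric 3×3 matrices `X, Y` over GF(2),
`B₀(α(X), α(Y)) = det(X + Y) + det X + det Y`. -/
theorem polar_form_det (X Y : Matrix (Fin 3) (Fin 3) (ZMod 2))
    (hX : X = Xᵀ) (hY : Y = Yᵀ) :
    B0 (alphaMap X) (alphaMap Y) = (X + Y).det + X.det + Y.det := by
  have h10 : X 1 0 = X 0 1 := by nth_rewrite 1 [hX]; exact Matrix.transpose_apply X 1 0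
  have h20 : X 2 0 = X 0 2 := by nth_rewrite 1 [hX]; exact Matrix.transpose_apply X 2 0
  have h21 : X 2 1 = X 1 2 := by nth_rewrite 1 [hX]; exact Matrix.transpose_apply X 2 1
  have g10 : Y 1 0 = Y 0 1 := by nth_rewrite 1 [hY]; exact Matrix.transpose_apply Y 1 0
  have g20 : Y 2 0 = Y 0 2 := by nth_rewrite 1 [hY]; exact Matrix.transpose_apply Y 2 0
  have g21 : Y 2 1 = Y 1 2 := by nth_rewrite 1 [hY]; exact Matrix.transpose_apply Y 2 1
  simp only [B0, q0, alphaMap, Pi.add_apply, Matrix.add_apply, det_fin_three,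
    Matrix.cons_val_zero, Matrix.cons_val_one, Matrix.head_cons,
    Matrix.cons_val_two, Matrix.cons_val_three, Matrix.cons_val_four,
    Matrix.tail_cons, Matrix.head_fin_const]
  rw [h10, h20, h21, g10, g20, g21]
  generalize X 0 0 = a; generalize X 0 1 = b; generalize X 0 2 = c
  generalize X 1 1 = d; generalize X 1 2 = e; generalize X 2 2 = f
  generalize Y 0 0 = a'; generalize Y 0 1 = b'; generalize Y 0 2 = c'
  generalize Y 1 1 = d'; generalize Y 1 2 = e'; generalize Y 2 2 = f'
  revert a b c d e f a' b' c' d' e' f'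
  decide
end

section
/- Let X, Y be invertible symmetric 3×3 matrices over GF(2), both different from 𝟙. Then B₀(α(X + 𝟙), α(Y + 𝟙)) = det(X + Y) + det(X + 𝟙) + det(Y + 𝟙). In particular: (a) if det(X+𝟙) = det(Y+𝟙) = 1 then B₀(α(X+𝟙), α(Y+𝟙)) = 0 iff det(X+Y) = 0; (b) if det(X+𝟙) = det(Y+𝟙) = 0 then B₀(α(X+𝟙), α(Y+𝟙)) = 0 iff det(X+Y) = 0; (c) if det(X+𝟙) ≠ det(Y+𝟙) then B₀(α(X+𝟙), α(Y+𝟙)) = 0 iff det(X+Y) = 1. -/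
open Matrix

private lemma cons_val_five' {α : Type*} (a0 a1 a2 a3 a4 a5 : α) :
    (![a0, a1, a2, a3, a4, a5] : Fin 6 → α) 5 = a5 := rfl

private lemma cases_of_key (B dXY dX dY : ZMod 2) (h : B = dXY + dX + dY) :
    (dX = 1 → dY = 1 → (B = 0 ↔ dXY = 0)) ∧
    (dX = 0 → dY = 0 → (B = 0 ↔ dXY = 0)) ∧
    (dX ≠ dY → (B = 0 ↔ dXY = 1)) := by
  subst h; revert dXY dX dY; decide

/-- Collinearity in `GQ(𝐒)`: for invertible symmetric `X, Y ≠ 1`,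
`B₀(α(X+1), α(Y+1)) = det(X+Y) + det(X+1) + det(Y+1)`, with the three special cases
(a), (b), (c). -/
theorem collinearity_criterion (X Y : Matrix (Fin 3) (Fin 3) (ZMod 2))
    (hX : X = Xᵀ) (hXdet : X.det = 1) (hX1 : X ≠ 1)
    (hY : Y = Yᵀ) (hYdet : Y.det = 1) (hY1 : Y ≠ 1) :
    B0 (alphaMap (X + 1)) (alphaMap (Y + 1)) = (X + Y).det + (X + 1).det + (Y + 1).det ∧
    ((X + 1).det = 1 → (Y + 1).det = 1 →
      (B0 (alphaMap (X + 1)) (alphaMap (Y + 1)) = 0 ↔ (X + Y).det = 0)) ∧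
    ((X + 1).det = 0 → (Y + 1).det = 0 →
      (B0 (alphaMap (X + 1)) (alphaMap (Y + 1)) = 0 ↔ (X + Y).det = 0)) ∧
    ((X + 1).det ≠ (Y + 1).det →
      (B0 (alphaMap (X + 1)) (alphaMap (Y + 1)) = 0 ↔ (X + Y).det = 1)) := by
  have key : B0 (alphaMap (X + 1)) (alphaMap (Y + 1)) =
      (X + Y).det + (X + 1).det + (Y + 1).det := by
    have e10 : X 1 0 = X 0 1 := by have := congrFun (congrFun hX 1) 0; simpa using this
    have e20 : X 2 0 = X 0 2 := by have := congrFun (congrFun hX 2) 0; simpa using this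
    have e21 : X 2 1 = X 1 2 := by have := congrFun (congrFun hX 2) 1; simpa using this
    have f10 : Y 1 0 = Y 0 1 := by have := congrFun (congrFun hY 1) 0; simpa using this
    have f20 : Y 2 0 = Y 0 2 := by have := congrFun (congrFun hY 2) 0; simpa using this
    have f21 : Y 2 1 = Y 1 2 := by have := congrFun (congrFun hY 2) 1; simpa using this
    simp only [B0, q0, alphaMap, Matrix.det_fin_three, Matrix.add_apply, Matrix.one_apply,
      Pi.add_apply, Matrix.cons_val_zero, Matrix.cons_val_one, Matrix.head_cons,
      Matrix.cons_val_fin_one, Matrix.head_fin_const, Fin.isValue, Matrix.cons_val_two,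
      Matrix.cons_val_three, Matrix.cons_val_four, Matrix.tail_cons, Fin.reduceEq, if_false,
      if_true, Matrix.one_apply_eq, cons_val_five', add_zero] at hXdet hYdet ⊢
    rw [e10, e20, e21] at hXdet ⊢
    rw [f10, f20, f21] at hYdet ⊢
    clear hX hY hX1 hY1 e10 e20 e21 f10 f20 f21
    generalize X 0 0 = a at *
    generalize X 0 1 = b at *
    generalize X 0 2 = c at *
    generalize X 1 1 = d at *
    generalize X 1 2 = e at *
    generalize X 2 2 = f at *
    generalize Y 0 0 = p at *
    generalize Y 0 1 = q at *
    generalize Y 0 2 = r at *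
    generalize Y 1 1 = s at *
    generalize Y 1 2 = t at *
    generalize Y 2 2 = u at *
    revert hXdet hYdet
    revert a b c d e f p q r s t u
    decide
  exact ⟨key, cases_of_key _ _ _ _ key⟩
end
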